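/- For every x in the closed ball B_R(0) ⊆ ℝ^d and every n ∈ ℕ, the integral over y ∈ B_R(x) of (max(‖x‖, ‖y − x‖))^{nd} dy equals (ω_d/(n+1)) (R^{(n+1)d} + n‖x‖^{(n+1)d}), where ω_d is the volume of the unit ball in ℝ^d. -/

import Mathlib

open MeasureTheory

/-- For `x` in the closed ball `B_R(0) ⊆ ℝ^d` and `n ∈ ℕ`,
`∫_{B_R(x)} (max(‖x‖, ‖y - x‖))^{nd} dy = (ω_d/(n+1)) (R^{(n+1)d} + n ‖x‖^{(n+1)d})`. -/
theorem integral_max_norm_pow_ball (d : ℕ) (hd : 1 ≤ d) (R : ℝ) (hR : 0 < R) (n : ℕ)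
    (x : EuclideanSpace ℝ (Fin d)) (hx : x ∈ Metric.closedBall (0 : EuclideanSpace ℝ (Fin d)) R) :
    ∫ y in Metric.ball x R, (max ‖x‖ ‖y - x‖) ^ (n * d) =
      (volume (Metric.ball (0 : EuclideanSpace ℝ (Fin d)) 1)).toReal / (n + 1)
        * (R ^ ((n + 1) * d) + n * ‖x‖ ^ ((n + 1) * d)) := by
  haveI : Nontrivial (EuclideanSpace ℝ (Fin d)) :=
    Module.nontrivial_of_finrank_pos (R := ℝ) (by simp [finrank_euclideanSpace_fin]; omega)
  set a := ‖x‖ with ha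
  have ha0 : 0 ≤ a := norm_nonneg x
  have haR : a ≤ R := by simpa using hx
  set f : ℝ → ℝ := fun r => Set.indicator (Set.Iio R) (fun r => (max a r) ^ (n * d)) r with hf
  have h1 : ∫ y in Metric.ball x R, (max ‖x‖ ‖y - x‖) ^ (n * d) = ∫ y, f ‖y - x‖ := by
    rw [← integral_indicator measurableSet_ball]
    apply congrArg
    ext y
    simp only [f, Set.indicator, Metric.mem_ball, Set.mem_Iio, dist_eq_norm]
    rfl
  rw [h1, integral_sub_right_eq_self (fun y => f ‖y‖) x,
    integral_fun_norm_addHaar volume f, finrank_euclideanSpace_fin]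
  have hd0 : (0:ℝ) < d := by positivity
  have hI : ∫ y in Set.Ioi (0:ℝ), y ^ (d-1) • f y
      = a ^ (n*d) * a ^ d / d + (R ^ ((n+1)*d) - a ^ ((n+1)*d)) / ((n+1)*d) := by
    have h2 : ∫ y in Set.Ioi (0:ℝ), y ^ (d-1) • f y
        = ∫ y in Set.Ioo (0:ℝ) R, y ^ (d-1) * (max a y) ^ (n * d) := by
      rw [← MeasureTheory.integral_indicator (measurableSet_Ioo)]
      rw [← MeasureTheory.integral_indicator (measurableSet_Ioi)]
      congr 1
      ext y
      by_cases h1 : (0:ℝ) < y <;> by_cases h2 : y < R <;>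
        simp [f, Set.indicator, Set.mem_Ioo, Set.mem_Ioi, h1, h2, smul_eq_mul]
    have h3 : ∫ y in Set.Ioo (0:ℝ) R, y ^ (d-1) * (max a y) ^ (n * d)
        = ∫ y in (0:ℝ)..R, y ^ (d-1) * (max a y) ^ (n * d) := by
      rw [intervalIntegral.integral_of_le hR.le, ← MeasureTheory.integral_Ioc_eq_integral_Ioo]
    have hcont : Continuous fun y : ℝ => y ^ (d-1) * (max a y) ^ (n * d) := by fun_prop
    have h4 : ∫ y in (0:ℝ)..a, y ^ (d-1) * (max a y) ^ (n * d) = a ^ (n*d) * a ^ d / d := by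
      rw [intervalIntegral.integral_congr (g := fun y => a ^ (n*d) * y ^ (d-1)) ?_]
      · rw [intervalIntegral.integral_const_mul, integral_pow]
        have e0 : d - 1 + 1 = d := by omega
        have e1 : ((d-1:ℕ):ℝ) + 1 = d := by rw [Nat.cast_sub hd]; push_cast; ring
        rw [e0, e1, zero_pow (by omega : d ≠ 0)]
        ring
      · intro y hy
        rw [Set.uIcc_of_le ha0] at hy
        simp only
        rw [max_eq_left hy.2]
        ring
    have h5 : ∫ y in a..R, y ^ (d-1) * (max a y) ^ (n * d)
        = (R ^ ((n+1)*d) - a ^ ((n+1)*d)) / ((n+1)*d) := by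
      rw [intervalIntegral.integral_congr (g := fun y => y ^ ((n+1)*d - 1)) ?_]
      · rw [integral_pow]
        have hnd1 : 1 ≤ (n+1)*d := Nat.mul_pos (Nat.succ_pos n) hd
        have e0 : (n+1)*d - 1 + 1 = (n+1)*d := by omega
        have e1 : (((n+1)*d - 1:ℕ):ℝ) + 1 = ((n:ℝ)+1)*d := by
          rw [Nat.cast_sub hnd1]; push_cast; ring
        rw [e0, e1]
      · intro y hy
        rw [Set.uIcc_of_le haR] at hy
        simp only
        rw [max_eq_right hy.1, ← pow_add]
        congr 1
        have : (n+1)*d = n*d + d := by ring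
        omega
    rw [h2, h3, ← intervalIntegral.integral_add_adjacent_intervals
      (hcont.intervalIntegrable 0 a) (hcont.intervalIntegrable a R), h4, h5]
  rw [hI]
  set ω := (volume (Metric.ball (0 : EuclideanSpace ℝ (Fin d)) 1)).toReal with hω
  rw [nsmul_eq_mul, smul_eq_mul]
  have hpow : a ^ (n*d) * a ^ d = a ^ ((n+1)*d) := by
    rw [← pow_add]; congr 1; ring
  have hn1 : ((n:ℝ) + 1) ≠ 0 := by positivity
  rw [hpow]
  field_simp
  rw [show volume.real (Metric.ball (0 : EuclideanSpace ℝ (Fin d)) 1) = ω from rfl]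
  ring
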